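/- (Pivoting rule) Let W⁺ and W⁻ be finite sets of points in ℝ^d, and let q be a point such that for some p ∈ convexHull(W⁺), the segment from q to p intersects convexHull(W⁻). Then every linear classifier (w,b) satisfying ⟨w,x⟩ > b for all x ∈ W⁺ and ⟨w,x⟩ < b for all x ∈ W⁻ must classify q as negative, i.e., ⟨w,q⟩ < b. -/

import Mathlib

open scoped RealInnerProductSpace

/-- Pivoting rule: if the segment from `q` to some `p ∈ convexHull W⁺` meets
`convexHull W⁻`, then every linear classifier `(w,b)` with all of `W⁺` positive and
all of `W⁻` negative classifies `q` as negative. -/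
theorem stmt_9 {d : ℕ} (Wp Wm : Finset (EuclideanSpace ℝ (Fin d)))
    (q p : EuclideanSpace ℝ (Fin d))
    (hp : p ∈ convexHull ℝ (Wp : Set (EuclideanSpace ℝ (Fin d))))
    (hseg : ∃ t ∈ Set.Icc (0 : ℝ) 1,
      (1 - t) • q + t • p ∈ convexHull ℝ (Wm : Set (EuclideanSpace ℝ (Fin d))))
    (w : EuclideanSpace ℝ (Fin d)) (b : ℝ)
    (hpos : ∀ x ∈ Wp, b < ⟪w, x⟫)
    (hneg : ∀ x ∈ Wm, ⟪w, x⟫ < b) :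
    ⟪w, q⟫ < b := by
  obtain ⟨t, ⟨ht0, ht1⟩, hm⟩ := hseg
  have hlin : IsLinearMap ℝ (fun x : EuclideanSpace ℝ (Fin d) => ⟪w, x⟫) :=
    (innerSL ℝ w).toLinearMap.isLinear
  have hph : b < ⟪w, p⟫ := by
    have := convexHull_min (fun x hx => hpos x hx) (convex_halfSpace_gt hlin b) hp
    exact this
  have hmh : ⟪w, (1 - t) • q + t • p⟫ < b := by
    have := convexHull_min (fun x hx => hneg x hx) (convex_halfSpace_lt hlin b) hm
    exact this
  rw [inner_add_right, real_inner_smul_right, real_inner_smul_right] at hmh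
  by_contra h
  push_neg at h
  nlinarith
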